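/- Truncated SPS theorem: with measurements Y_i = φ_i^T p̊ + W_i (W_i independent, symmetric about 0) and arbitrary deterministic weights c_{k,i} ∈ [0,1], define S̃_0(p) = Σ_i c_{k,i} φ_i (Y_i - φ_i^T p) and S̃_j(p) = Σ_i c_{k,i} A_{j,i} φ_i (Y_i - φ_i^T p) with i.i.d. random signs A_{j,i} independent of the noise, Z̃_j(p) = ||S̃_j(p)||², and Σ̃_{q,k} = {p : at least q of Z̃_1(p),...,Z̃_{m-1}(p) exceed Z̃_0(p)} (uniform random tie-breaking). Then P(p̊ ∈ Σ̃_{q,k}) = 1 - q/m. -/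

import Mathlib

open MeasureTheory ProbabilityTheory
open scoped ENNReal

/-- A random sign: a ±1-valued random variable taking each value with probability 1/2. -/
def IsRandSign {Ω : Type*} [MeasurableSpace Ω] (P : Measure Ω) (X : Ω → ℝ) : Prop :=
  Measurable X ∧ P {ω | X ω = 1} = 1/2 ∧ P {ω | X ω = -1} = 1/2

/-- The truncated SPS statistics at a parameter `p`, with deterministic weights `c i`:
`spsZc … 0` is `‖Σ_i c_i (Y_i - ⟪φ_i, p⟫) φ_i‖²` and `spsZc … j.succ` is
`‖Σ_i c_i A_{j,i} (Y_i - ⟪φ_i, p⟫) φ_i‖²`. The paper's `m` is `mm + 1`. -/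
noncomputable def spsZc {Ω : Type*} {N np mm : ℕ}
    (φ : Fin N → EuclideanSpace ℝ (Fin np)) (c : Fin N → ℝ) (Y : Fin N → Ω → ℝ)
    (A : Fin mm → Fin N → Ω → ℝ) (p : EuclideanSpace ℝ (Fin np)) :
    Fin (mm + 1) → Ω → ℝ :=
  fun j => Fin.cases (motive := fun _ => Ω → ℝ)
    (fun ω => ‖∑ i, (c i * (Y i ω - (inner ℝ (φ i) p : ℝ))) • φ i‖ ^ 2)
    (fun j' ω => ‖∑ i, (c i * A j' i ω * (Y i ω - (inner ℝ (φ i) p : ℝ))) • φ i‖ ^ 2) j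

section SPSAux

open Finset



/-- Pushforward of a product probability measure under a coordinatewise map
composed with a permutation of indices. -/
lemma sps_pi_map_comp {ι : Type*} [Fintype ι] (μ : ι → Measure ℝ)
    [∀ i, IsProbabilityMeasure (μ i)] (e : ι ≃ ι) (g : ι → ℝ → ℝ)
    (hg : ∀ i, Measurable (g i)) (hinv : ∀ i, (μ (e i)).map (g i) = μ i) :
    (Measure.pi μ).map (fun x i => g i (x (e i))) = Measure.pi μ := by
  have hΦ : Measurable fun (x : ι → ℝ) i => g i (x (e i)) :=
    measurable_pi_iff.mpr fun i => (hg i).comp (measurable_pi_apply (e i))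
  refine (Measure.pi_eq (μ := μ) fun s hs => ?_).symm
  rw [Measure.map_apply hΦ (MeasurableSet.univ_pi hs)]
  have hset : (fun (x : ι → ℝ) i => g i (x (e i))) ⁻¹' Set.pi Set.univ s
      = Set.pi Set.univ (fun i => g (e.symm i) ⁻¹' s (e.symm i)) := by
    ext x
    simp only [Set.mem_preimage, Set.mem_pi, Set.mem_univ, forall_true_left]
    constructor
    · intro h i
      simpa using h (e.symm i)
    · intro h i
      simpa using h (e i)
  rw [hset, Measure.pi_pi]
  have h1 : ∀ i, μ i (g (e.symm i) ⁻¹' s (e.symm i)) = μ (e.symm i) (s (e.symm i)) := by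
    intro i
    have := hinv (e.symm i)
    rw [Equiv.apply_symm_apply] at this
    rw [← this, Measure.map_apply (hg (e.symm i)) (hs (e.symm i))]
  simp_rw [h1]
  exact (Equiv.prod_comp e.symm fun i => μ i (s i))

lemma sps_sign_compl {Ω : Type*} [MeasurableSpace Ω] {P : Measure Ω}
    [IsProbabilityMeasure P] {X : Ω → ℝ} (h : IsRandSign P X) :
    P.map X ({1, -1} : Set ℝ)ᶜ = 0 := by
  obtain ⟨hm, h1, h2⟩ := h
  haveI : IsProbabilityMeasure (P.map X) := Measure.isProbabilityMeasure_map hm.aemeasurable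
  have hs : MeasurableSet ({1, -1} : Set ℝ) := (measurableSet_singleton _).union (measurableSet_singleton _)
  have key : P.map X ({1, -1} : Set ℝ) = 1 := by
    rw [Measure.map_apply hm hs]
    have hpre : X ⁻¹' ({1, -1} : Set ℝ) = X ⁻¹' {1} ∪ X ⁻¹' {-1} := by
      ext ω; simp [Set.mem_preimage]
    rw [hpre, measure_union _ (hm (measurableSet_singleton (-1 : ℝ)))]
    · have e1 : X ⁻¹' {(1:ℝ)} = {ω | X ω = 1} := by ext ω; simp
      have e2 : X ⁻¹' {(-1:ℝ)} = {ω | X ω = -1} := by ext ω; simp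
      rw [e1, e2, h1, h2, ENNReal.div_add_div_same]
      norm_num
      exact ENNReal.div_self (by norm_num) (by norm_num)
    · rw [Set.disjoint_left]
      intro ω hω hω'
      simp only [Set.mem_preimage, Set.mem_singleton_iff] at hω hω'
      rw [hω] at hω'; norm_num at hω'
  have hcompl := measure_compl hs (measure_ne_top (P.map X) _)
  rw [key, measure_univ] at hcompl
  rw [hcompl]
  simp

lemma sps_sign_half {Ω : Type*} [MeasurableSpace Ω] {P : Measure Ω}
    [IsProbabilityMeasure P] {X : Ω → ℝ} (h : IsRandSign P X) :
    P.map X {(1 : ℝ)} = 1/2 ∧ P.map X {(-1 : ℝ)} = 1/2 := by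
  obtain ⟨hm, h1, h2⟩ := h
  constructor
  · rw [Measure.map_apply hm (measurableSet_singleton _)]
    convert h1 using 2
    ext; simp
  · rw [Measure.map_apply hm (measurableSet_singleton _)]
    convert h2 using 2
    ext; simp

lemma sps_sign_neg {Ω : Type*} [MeasurableSpace Ω] {P : Measure Ω}
    [IsProbabilityMeasure P] {X : Ω → ℝ} (h : IsRandSign P X) :
    (P.map X).map (fun x => -x) = P.map X := by
  classical
  have hc := sps_sign_compl h
  obtain ⟨h1, h2⟩ := sps_sign_half h
  have key : ∀ t : Set ℝ, MeasurableSet t → P.map X t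
      = (if (1:ℝ) ∈ t then 1/2 else 0) + (if (-1:ℝ) ∈ t then 1/2 else 0) := by
    intro t ht
    have hsplit := measure_inter_add_diff (μ := P.map X) t
      ((measurableSet_singleton (1:ℝ)).union (measurableSet_singleton (-1:ℝ)))
    have hdiff : P.map X (t \ ({1, -1} : Set ℝ)) = 0 :=
      measure_mono_null (Set.diff_subset_compl t _) hc
    have hsplit2 := measure_inter_add_diff (μ := P.map X) (t ∩ ({1, -1} : Set ℝ))
      (measurableSet_singleton (1:ℝ))
    have e1 : t ∩ ({1, -1} : Set ℝ) ∩ {1} = t ∩ {1} := by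
      ext x; simp only [Set.mem_inter_iff, Set.mem_insert_iff, Set.mem_singleton_iff]; tauto
    have e2 : (t ∩ ({1, -1} : Set ℝ)) \ {1} = t ∩ {-1} := by
      ext x
      simp only [Set.mem_diff, Set.mem_inter_iff, Set.mem_insert_iff, Set.mem_singleton_iff]
      constructor
      · rintro ⟨⟨hx, h | h⟩, hne⟩
        · exact absurd h hne
        · exact ⟨hx, h⟩
      · rintro ⟨hx, h⟩; exact ⟨⟨hx, Or.inr h⟩, by rw [h]; norm_num⟩
    have ht1 : P.map X (t ∩ {1}) = if (1:ℝ) ∈ t then 1/2 else 0 := by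
      by_cases h : (1:ℝ) ∈ t
      · rw [if_pos h, ← h1]; congr 1; ext x
        simp only [Set.mem_inter_iff, Set.mem_singleton_iff]
        exact ⟨fun hh => hh.2, fun hh => ⟨hh ▸ h, hh⟩⟩
      · rw [if_neg h]
        have : t ∩ {1} = ∅ := by
          ext x; simp only [Set.mem_inter_iff, Set.mem_singleton_iff, Set.mem_empty_iff_false]
          exact ⟨fun hh => h (hh.2 ▸ hh.1), False.elim⟩
        simp [this]
    have ht2 : P.map X (t ∩ {-1}) = if (-1:ℝ) ∈ t then 1/2 else 0 := by
      by_cases h : (-1:ℝ) ∈ t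
      · rw [if_pos h, ← h2]; congr 1; ext x
        simp only [Set.mem_inter_iff, Set.mem_singleton_iff]
        exact ⟨fun hh => hh.2, fun hh => ⟨hh ▸ h, hh⟩⟩
      · rw [if_neg h]
        have : t ∩ {-1} = ∅ := by
          ext x; simp only [Set.mem_inter_iff, Set.mem_singleton_iff, Set.mem_empty_iff_false]
          exact ⟨fun hh => h (hh.2 ▸ hh.1), False.elim⟩
        simp [this]
    calc P.map X t = P.map X (t ∩ ({1,-1} : Set ℝ)) + P.map X (t \ ({1,-1} : Set ℝ)) := hsplit.symm
      _ = P.map X (t ∩ ({1,-1} : Set ℝ)) := by rw [hdiff, add_zero]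
      _ = P.map X (t ∩ {1}) + P.map X (t ∩ {-1}) := by rw [← e1, ← e2, hsplit2]
      _ = _ := by rw [ht1, ht2]
  ext t ht
  rw [Measure.map_apply measurable_neg ht, key _ (measurable_neg ht), key t ht]
  have m1 : (1:ℝ) ∈ (fun x : ℝ => -x) ⁻¹' t ↔ (-1:ℝ) ∈ t := by simp
  have m2 : (-1:ℝ) ∈ (fun x : ℝ => -x) ⁻¹' t ↔ (1:ℝ) ∈ t := by simp
  rw [if_congr m1 rfl rfl, if_congr m2 rfl rfl, add_comm]

variable {L : Type*} [LinearOrder L]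

/-- rank of index k among the values of v -/
def spsRank {m : ℕ} (v : Fin m → L) (k : Fin m) : ℕ :=
  #(univ.filter (fun j => v j < v k))

lemma spsRank_le {m : ℕ} (v : Fin (m+1) → L) (k : Fin (m+1)) : spsRank v k ≤ m := by
  classical
  have h : univ.filter (fun j => v j < v k) ⊆ univ.erase k := by
    intro j hj
    simp only [mem_filter] at hj
    exact mem_erase.mpr ⟨fun he => absurd (he ▸ hj.2) (lt_irrefl _), mem_univ _⟩
  calc #(univ.filter (fun j => v j < v k)) ≤ #(univ.erase k) := card_le_card h
    _ = m := by rw [card_erase_of_mem (mem_univ _), card_univ, Fintype.card_fin]; rfl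

lemma spsRank_inj {m : ℕ} (v : Fin m → L) (hv : Function.Injective v) :
    Function.Injective (spsRank v) := by
  classical
  have key : ∀ j k : Fin m, v j < v k → spsRank v j < spsRank v k := by
    intro j k hjk
    apply card_lt_card
    constructor
    · intro i hi
      simp only [mem_filter] at hi ⊢
      exact ⟨hi.1, hi.2.trans hjk⟩
    · intro hsub
      have := hsub (mem_filter.mpr ⟨mem_univ j, hjk⟩)
      simp only [mem_filter] at this
      exact absurd this.2 (lt_irrefl _)
  intro j k hjk
  rcases lt_trichotomy (v j) (v k) with h | h | h
  · exact absurd hjk (Nat.ne_of_lt (key _ _ h))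
  · exact hv h
  · exact absurd hjk.symm (Nat.ne_of_lt (key _ _ h))

lemma spsRank_surj {m : ℕ} (v : Fin (m+1) → L) (hv : Function.Injective v)
    (r : ℕ) (hr : r ≤ m) : ∃ k, spsRank v k = r := by
  classical
  let f : Fin (m+1) → Fin (m+1) := fun k => ⟨spsRank v k, Nat.lt_succ_of_le (spsRank_le v k)⟩
  have hf : Function.Injective f := by
    intro a b hab
    exact spsRank_inj v hv (congrArg Fin.val hab)
  have hsurj : Function.Surjective f := Finite.surjective_of_injective hf
  obtain ⟨k, hk⟩ := hsurj ⟨r, Nat.lt_succ_of_le hr⟩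
  exact ⟨k, congrArg Fin.val hk⟩

lemma spsCnt_eq {m : ℕ} (v : Fin (m+1) → L) (hv : Function.Injective v) :
    #(univ.filter (fun j : Fin m => v 0 < v j.succ)) = m - spsRank v 0 := by
  classical
  have hpart : #(univ.filter (fun j : Fin m => v 0 < v j.succ))
      + #(univ.filter (fun j : Fin m => v j.succ < v 0)) = m := by
    rw [← card_union_of_disjoint]
    · have : univ.filter (fun j : Fin m => v 0 < v j.succ) ∪ univ.filter (fun j : Fin m => v j.succ < v 0) = univ := by
        apply eq_univ_of_forall
        intro j
        rcases lt_trichotomy (v 0) (v j.succ) with h | h | h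
        · exact mem_union_left _ (mem_filter.mpr ⟨mem_univ _, h⟩)
        · exact absurd (hv h) (Fin.succ_ne_zero j).symm
        · exact mem_union_right _ (mem_filter.mpr ⟨mem_univ _, h⟩)
      rw [this, card_univ, Fintype.card_fin]
    · rw [disjoint_filter]
      intro j _ h1
      exact not_lt_of_gt h1
  have hrk : #(univ.filter (fun j : Fin m => v j.succ < v 0)) = spsRank v 0 := by
    unfold spsRank
    apply card_bij (fun j _ => j.succ)
    · intro j hj
      simp only [mem_filter] at hj ⊢
      exact ⟨mem_univ _, hj.2⟩
    · intro a ha b hb hab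
      exact Fin.succ_injective _ hab
    · intro b hb
      simp only [mem_filter] at hb
      have hb0 : b ≠ 0 := by
        intro h; rw [h] at hb; exact absurd hb.2 (lt_irrefl _)
      obtain ⟨j, rfl⟩ := Fin.exists_succ_eq.mpr hb0
      exact ⟨j, mem_filter.mpr ⟨mem_univ _, hb.2⟩, rfl⟩
  omega

abbrev spsIdx (N mm : ℕ) := Fin N ⊕ ((Fin mm × Fin N) ⊕ Fin (mm + 1))

def spsW {N mm : ℕ} (i : Fin N) : spsIdx N mm := Sum.inl i
def spsA {N mm : ℕ} (j : Fin mm) (i : Fin N) : spsIdx N mm := Sum.inr (Sum.inl (j, i))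
def spsU {N mm : ℕ} (j : Fin (mm + 1)) : spsIdx N mm := Sum.inr (Sum.inr j)

noncomputable def spsZx {N np mm : ℕ} (φ : Fin N → EuclideanSpace ℝ (Fin np)) (c : Fin N → ℝ) :
    Fin (mm + 1) → (spsIdx N mm → ℝ) → ℝ :=
  fun j => Fin.cases (motive := fun _ => (spsIdx N mm → ℝ) → ℝ)
    (fun x => ‖∑ i, (c i * x (spsW i)) • φ i‖ ^ 2)
    (fun j' x => ‖∑ i, (c i * x (spsA j' i) * x (spsW i)) • φ i‖ ^ 2) j

noncomputable def spsV {N np mm : ℕ} (φ : Fin N → EuclideanSpace ℝ (Fin np)) (c : Fin N → ℝ)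
    (x : spsIdx N mm → ℝ) (j : Fin (mm + 1)) : ℝ ×ₗ ℝ :=
  toLex (spsZx φ c j x, x (spsU j))

lemma spsZx_meas {N np mm : ℕ} (φ : Fin N → EuclideanSpace ℝ (Fin np)) (c : Fin N → ℝ)
    (j : Fin (mm + 1)) : Measurable (spsZx φ c j) := by
  induction j using Fin.cases with
  | zero =>
    have : Measurable fun x : spsIdx N mm → ℝ => ∑ i, (c i * x (spsW i)) • φ i :=
      Finset.measurable_sum _ fun i _ =>
        ((measurable_const.mul (measurable_pi_apply (spsW i))).smul_const (φ i))
    simpa [spsZx] using (this.norm.pow_const 2)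
  | succ j' =>
    have : Measurable fun x : spsIdx N mm → ℝ => ∑ i, (c i * x (spsA j' i) * x (spsW i)) • φ i :=
      Finset.measurable_sum _ fun i _ =>
        (((measurable_const.mul (measurable_pi_apply (spsA j' i))).mul
          (measurable_pi_apply (spsW i))).smul_const (φ i))
    simpa [spsZx] using (this.norm.pow_const 2)

lemma spsV_lt_measurable {N np mm : ℕ} (φ : Fin N → EuclideanSpace ℝ (Fin np)) (c : Fin N → ℝ)
    (j k : Fin (mm + 1)) : MeasurableSet {x : spsIdx N mm → ℝ | spsV φ c x j < spsV φ c x k} := by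
  have hset : {x : spsIdx N mm → ℝ | spsV φ c x j < spsV φ c x k}
      = {x | spsZx φ c j x < spsZx φ c k x}
        ∪ ({x | spsZx φ c j x = spsZx φ c k x} ∩ {x | x (spsU j) < x (spsU k)}) := by
    ext x
    simp only [Set.mem_setOf_eq, Set.mem_union, Set.mem_inter_iff, spsV, Prod.Lex.lt_iff, ofLex_toLex]
  rw [hset]
  exact (measurableSet_lt (spsZx_meas φ c j) (spsZx_meas φ c k)).union
    ((measurableSet_eq_fun (spsZx_meas φ c j) (spsZx_meas φ c k)).inter
      (measurableSet_lt (measurable_pi_apply _) (measurable_pi_apply _)))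

lemma spsRank_V_meas {N np mm : ℕ} (φ : Fin N → EuclideanSpace ℝ (Fin np)) (c : Fin N → ℝ)
    (k : Fin (mm + 1)) : Measurable fun x : spsIdx N mm → ℝ => spsRank (spsV φ c x) k := by
  classical
  have : (fun x : spsIdx N mm → ℝ => spsRank (spsV φ c x) k)
      = fun x => ∑ j : Fin (mm + 1), if spsV φ c x j < spsV φ c x k then 1 else 0 := by
    funext x
    rw [spsRank, Finset.card_filter]
  rw [this]
  exact Finset.measurable_sum _ fun j _ =>
    Measurable.ite (spsV_lt_measurable φ c j k) measurable_const measurable_const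

def spsT {N mm : ℕ} (k : Fin mm) (x : spsIdx N mm → ℝ) : spsIdx N mm → ℝ :=
  fun idx => Sum.elim (fun i => x (spsA k i) * x (spsW i))
    (Sum.elim (fun p : Fin mm × Fin N => if p.1 = k then x (spsA k p.2)
        else x (spsA p.1 p.2) * x (spsA k p.2))
      (fun j => x (spsU (Equiv.swap 0 k.succ j)))) idx

lemma spsT_meas {N mm : ℕ} (k : Fin mm) : Measurable (spsT (N := N) k) := by
  apply measurable_pi_iff.mpr
  rintro (i | ⟨⟨j, i⟩ | j⟩)
  · exact (measurable_pi_apply _).mul (measurable_pi_apply _)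
  · by_cases h : j = k
    · simp only [spsT, Sum.elim_inr, Sum.elim_inl, if_pos h]
      exact measurable_pi_apply _
    · simp only [spsT, Sum.elim_inr, Sum.elim_inl, if_neg h]
      exact (measurable_pi_apply _).mul (measurable_pi_apply _)
  · exact measurable_pi_apply _

lemma spsV_spsT {N np mm : ℕ} (φ : Fin N → EuclideanSpace ℝ (Fin np)) (c : Fin N → ℝ)
    (k : Fin mm) (x : spsIdx N mm → ℝ)
    (hx : ∀ i, x (spsA k i) = 1 ∨ x (spsA k i) = -1) (j : Fin (mm + 1)) :
    spsV φ c (spsT k x) j = spsV φ c x (Equiv.swap 0 k.succ j) := by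
  have hsq : ∀ i (t : ℝ), (x (spsA k i) = 1 ∨ x (spsA k i) = -1) →
      x (spsA k i) * (x (spsA k i) * t) = t := by
    rintro i t (h | h) <;> rw [h] <;> ring
  have hu : ∀ j', spsT k x (spsU j') = x (spsU (Equiv.swap 0 k.succ j')) := fun j' => rfl
  induction j using Fin.cases with
  | zero =>
    have hswap : Equiv.swap (0 : Fin (mm+1)) k.succ 0 = k.succ := Equiv.swap_apply_left _ _
    have hZ : spsZx φ c 0 (spsT k x) = spsZx φ c k.succ x := by
      simp only [spsZx, Fin.cases_zero, Fin.cases_succ]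
      rw [Finset.sum_congr rfl (fun i _ => by
        have h1 : spsT k x (spsW i) = x (spsA k i) * x (spsW i) := rfl
        rw [h1, mul_assoc] :
        ∀ i ∈ Finset.univ, (c i * spsT k x (spsW i)) • φ i
          = (c i * x (spsA k i) * x (spsW i)) • φ i)]
    unfold spsV
    rw [hswap, hZ, hu 0, hswap]
  | succ j' =>
    by_cases hjk : j' = k
    · subst hjk
      have hswap : Equiv.swap (0 : Fin (mm+1)) j'.succ j'.succ = 0 := Equiv.swap_apply_right _ _
      have hZ : spsZx φ c j'.succ (spsT j' x) = spsZx φ c 0 x := by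
        simp only [spsZx, Fin.cases_zero, Fin.cases_succ]
        rw [Finset.sum_congr rfl (fun i _ => by
          have h1 : spsT j' x (spsW i) = x (spsA j' i) * x (spsW i) := rfl
          have h2 : spsT j' x (spsA j' i) = x (spsA j' i) := by simp [spsT, spsA]
          rw [h1, h2, mul_assoc, hsq i _ (hx i)] :
          ∀ i ∈ Finset.univ, (c i * spsT j' x (spsA j' i) * spsT j' x (spsW i)) • φ i
            = (c i * x (spsW i)) • φ i)]
      unfold spsV
      rw [hswap, hZ, hu j'.succ, hswap]
    · have hne0 : j'.succ ≠ (0 : Fin (mm+1)) := Fin.succ_ne_zero j'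
      have hnek : j'.succ ≠ k.succ := fun h => hjk (Fin.succ_injective _ h)
      have hswap : Equiv.swap (0 : Fin (mm+1)) k.succ j'.succ = j'.succ :=
        Equiv.swap_apply_of_ne_of_ne hne0 hnek
      have hZ : spsZx φ c j'.succ (spsT k x) = spsZx φ c j'.succ x := by
        simp only [spsZx, Fin.cases_succ]
        rw [Finset.sum_congr rfl (fun i _ => by
          have h1 : spsT k x (spsW i) = x (spsA k i) * x (spsW i) := rfl
          have h2 : spsT k x (spsA j' i) = x (spsA j' i) * x (spsA k i) := by
            simp [spsT, spsA, hjk]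
          have h3 : x (spsA j' i) * x (spsA k i) * (x (spsA k i) * x (spsW i))
              = x (spsA j' i) * (x (spsA k i) * (x (spsA k i) * x (spsW i))) := by ring
          rw [h1, h2, mul_assoc (c i), h3, hsq i _ (hx i), ← mul_assoc] :
          ∀ i ∈ Finset.univ, (c i * spsT k x (spsA j' i) * spsT k x (spsW i)) • φ i
            = (c i * x (spsA j' i) * x (spsW i)) • φ i)]
      unfold spsV
      rw [hswap, hZ, hu j'.succ, hswap]

def spsE {N mm : ℕ} (k : Fin mm) : spsIdx N mm ≃ spsIdx N mm :=
  Equiv.sumCongr (Equiv.refl _) (Equiv.sumCongr (Equiv.refl _) (Equiv.swap 0 k.succ))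

def spsG {N mm : ℕ} (k : Fin mm) (ε : Fin N → Bool) : spsIdx N mm → ℝ → ℝ :=
  Sum.elim (fun i t => (if ε i then (1:ℝ) else -1) * t)
    (Sum.elim (fun p t => if p.1 = k then t else (if ε p.2 then (1:ℝ) else -1) * t)
      (fun _ t => t))

def spsTE {N mm : ℕ} (k : Fin mm) (ε : Fin N → Bool) (x : spsIdx N mm → ℝ) : spsIdx N mm → ℝ :=
  fun idx => spsG k ε idx (x (spsE k idx))

def spsC {N mm : ℕ} (k : Fin mm) (ε : Fin N → Bool) : Set (spsIdx N mm → ℝ) :=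
  {x | ∀ i, x (spsA k i) = (if ε i then (1:ℝ) else -1)}

lemma spsG_meas {N mm : ℕ} (k : Fin mm) (ε : Fin N → Bool) (idx : spsIdx N mm) :
    Measurable (spsG k ε idx) := by
  rcases idx with i | ⟨⟨j, i⟩ | j⟩
  · exact measurable_const.mul measurable_id
  · by_cases h : j = k
    · simpa [spsG, h] using (measurable_id' : Measurable fun t : ℝ => t)
    · show Measurable fun t : ℝ => if j = k then t else (if ε i then (1:ℝ) else -1) * t
      simp only [if_neg h]
      exact measurable_const.mul measurable_id
  · exact measurable_id

lemma spsT_eq_on_C {N mm : ℕ} (k : Fin mm) (ε : Fin N → Bool) (x : spsIdx N mm → ℝ)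
    (hx : x ∈ spsC k ε) : spsT k x = spsTE k ε x := by
  funext idx
  rcases idx with i | ⟨⟨j, i⟩ | j⟩
  · show x (spsA k i) * x (spsW i) = (if ε i then (1:ℝ) else -1) * x (Sum.inl i)
    rw [hx i]; rfl
  · by_cases h : j = k
    · subst h
      show (if j = j then x (spsA j i) else _) = if j = j then x (Sum.inr (Sum.inl (j, i))) else _
      simp [spsA]
    · show (if j = k then x (spsA k i) else x (spsA j i) * x (spsA k i))
        = if j = k then x (Sum.inr (Sum.inl (j, i))) else (if ε i then (1:ℝ) else -1) * x (Sum.inr (Sum.inl (j, i)))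
      rw [if_neg h, if_neg h, hx i, mul_comm]; rfl
  · rfl

lemma spsTE_pre_C {N mm : ℕ} (k : Fin mm) (ε : Fin N → Bool) :
    spsTE k ε ⁻¹' (spsC k ε) = spsC k ε := by
  ext x
  simp only [Set.mem_preimage, spsC, Set.mem_setOf_eq]
  have h : ∀ i, spsTE k ε x (spsA k i) = x (spsA k i) := by
    intro i
    show spsG k ε (spsA k i) (x (spsE k (spsA k i))) = x (spsA k i)
    rw [show spsE k (spsA k i) = spsA k i from rfl]
    simp [spsG, spsA]
  constructor
  · intro hh i; rw [← h i]; exact hh i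
  · intro hh i; rw [h i]; exact hh i

lemma spsC_meas {N mm : ℕ} (k : Fin mm) (ε : Fin N → Bool) : MeasurableSet (spsC k ε) := by
  have : spsC k ε = ⋂ i, (fun x : spsIdx N mm → ℝ => x (spsA k i)) ⁻¹' {if ε i then (1:ℝ) else -1} := by
    ext x; simp [spsC]
  rw [this]
  exact MeasurableSet.iInter fun i => (measurable_pi_apply _) (measurableSet_singleton _)

lemma spsC_disjoint {N mm : ℕ} (k : Fin mm) {ε ε' : Fin N → Bool} (h : ε ≠ ε') :
    Disjoint (spsC k ε) (spsC (N := N) (mm := mm) k ε') := by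
  rw [Set.disjoint_left]
  intro x hx hx'
  apply h
  funext i
  have h1 := hx i
  have h2 := hx' i
  by_contra hne
  rw [h1] at h2
  rcases Bool.eq_false_or_eq_true (ε i) with hb | hb <;>
    rcases Bool.eq_false_or_eq_true (ε' i) with hb' | hb'
  · exact hne (hb.trans hb'.symm)
  · rw [hb, hb'] at h2; norm_num at h2
  · rw [hb, hb'] at h2; norm_num at h2
  · exact hne (hb.trans hb'.symm)

lemma spsCnt_meas {N np mm : ℕ} (φ : Fin N → EuclideanSpace ℝ (Fin np)) (c : Fin N → ℝ) :
    Measurable fun x : spsIdx N mm → ℝ =>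
      #(univ.filter fun j : Fin mm => spsV φ c x 0 < spsV φ c x j.succ) := by
  classical
  have h : (fun x : spsIdx N mm → ℝ =>
        #(univ.filter fun j : Fin mm => spsV φ c x 0 < spsV φ c x j.succ))
      = fun x => ∑ j : Fin mm, if spsV φ c x 0 < spsV φ c x j.succ then 1 else 0 := by
    funext x; rw [Finset.card_filter]
  rw [h]
  exact Finset.measurable_sum _ fun j _ =>
    Measurable.ite (spsV_lt_measurable φ c 0 j.succ) measurable_const measurable_const

end SPSAux

open Finset in
/-- Truncated SPS theorem. Measurements `Y i = ⟪φ i, p̊⟫ + W i` with independent noises,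
each symmetric about 0, arbitrary deterministic weights `c i ∈ [0,1]`, i.i.d. random
signs `A j i` and i.i.d. atomless tie-breakers `U j`, all jointly independent of the
noises. Then the confidence region `Σ̃_{q,k}` (the set of `p` such that at least `q` of
the perturbed statistics exceed the unperturbed one, with uniform random tie-breaking
realized lexicographically via the `U j`) contains the true parameter `p̊` with
probability exactly `1 - q/m`, where `m = mm + 1`. -/
theorem truncated_sps_confidence {Ω : Type*} [MeasurableSpace Ω] (P : Measure Ω)
    [IsProbabilityMeasure P] (N np mm q : ℕ) (hq : 1 ≤ q) (hqm : q ≤ mm)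
    (φ : Fin N → EuclideanSpace ℝ (Fin np)) (p₀ : EuclideanSpace ℝ (Fin np))
    (c : Fin N → ℝ) (hc : ∀ i, c i ∈ Set.Icc (0 : ℝ) 1)
    (W Y : Fin N → Ω → ℝ) (A : Fin mm → Fin N → Ω → ℝ) (U : Fin (mm + 1) → Ω → ℝ)
    (hWmeas : ∀ i, Measurable (W i))
    (hWsym : ∀ i, Measure.map (W i) P = Measure.map (fun ω => -W i ω) P)
    (hA : ∀ j i, IsRandSign P (A j i))
    (hUmeas : ∀ j, Measurable (U j))
    (hUid : ∀ j j', IdentDistrib (U j) (U j') P P)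
    (hUcont : ∀ j, ∀ x : ℝ, P {ω | U j ω = x} = 0)
    (hindep : iIndepFun
      (Sum.elim W (Sum.elim (fun p : Fin mm × Fin N => A p.1 p.2) U) :
        Fin N ⊕ ((Fin mm × Fin N) ⊕ Fin (mm + 1)) → Ω → ℝ) P)
    (hY : ∀ i ω, Y i ω = (inner ℝ (φ i) p₀ : ℝ) + W i ω) :
    P {ω | q ≤ Set.ncard {j : Fin mm |
        (toLex (spsZc φ c Y A p₀ 0 ω, U 0 ω) : ℝ ×ₗ ℝ)
          < toLex (spsZc φ c Y A p₀ j.succ ω, U j.succ ω)}}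
      = 1 - (q : ℝ≥0∞) / ((mm + 1 : ℕ) : ℝ≥0∞) := by
  classical
  set X : (idx : spsIdx N mm) → Ω → ℝ :=
    (Sum.elim W (Sum.elim (fun p : Fin mm × Fin N => A p.1 p.2) U)) with hXdef
  have hXmeas : ∀ idx, Measurable (X idx) := by
    rintro (i | ⟨⟨j, i⟩ | j⟩)
    · exact hWmeas i
    · exact (hA j i).1
    · exact hUmeas j
  set XT : Ω → (spsIdx N mm → ℝ) := fun ω idx => X idx ω with hXTdef
  have hXTmeas : Measurable XT := measurable_pi_iff.mpr hXmeas
  set μc : spsIdx N mm → Measure ℝ := fun idx => P.map (X idx) with hμdef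
  haveI hPμ : ∀ idx, IsProbabilityMeasure (μc idx) := fun idx =>
    Measure.isProbabilityMeasure_map (hXmeas idx).aemeasurable
  set ν : Measure (spsIdx N mm → ℝ) := Measure.pi μc with hνdef
  haveI hPν : IsProbabilityMeasure ν := by
    constructor
    rw [hνdef, ← Set.pi_univ Set.univ, Measure.pi_pi]
    simp
  -- the law of the tuple is the product measure
  have hν : P.map XT = ν := by
    refine (Measure.pi_eq fun s hs => ?_).symm
    rw [Measure.map_apply hXTmeas (MeasurableSet.univ_pi hs)]
    have hpre : XT ⁻¹' Set.pi Set.univ s = ⋂ idx ∈ Finset.univ, X idx ⁻¹' s idx := by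
      ext ω
      simp [hXTdef, Set.mem_pi]
    rw [hpre, hindep.measure_inter_preimage_eq_mul Finset.univ (fun idx _ => hs idx)]
    exact Finset.prod_congr rfl fun idx _ => (Measure.map_apply (hXmeas idx) (hs idx)).symm
  have hνapply : ∀ B : Set (spsIdx N mm → ℝ), MeasurableSet B → ν B = P (XT ⁻¹' B) := by
    intro B hB
    rw [← hν, Measure.map_apply hXTmeas hB]
  -- the sign coordinates are a.s. ±1
  have hGnull : ∀ k : Fin mm, ν {x : spsIdx N mm → ℝ | ∀ i, x (spsA k i) = 1 ∨ x (spsA k i) = -1}ᶜ = 0 := by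
    intro k
    have hsub : {x : spsIdx N mm → ℝ | ∀ i, x (spsA k i) = 1 ∨ x (spsA k i) = -1}ᶜ
        ⊆ ⋃ i : Fin N, (fun x : spsIdx N mm → ℝ => x (spsA k i)) ⁻¹' ({1, -1} : Set ℝ)ᶜ := by
      intro x hx
      simp only [Set.mem_compl_iff, Set.mem_setOf_eq, not_forall] at hx
      obtain ⟨i, hi⟩ := hx
      refine Set.mem_iUnion.mpr ⟨i, ?_⟩
      simp only [Set.mem_preimage, Set.mem_compl_iff, Set.mem_insert_iff, Set.mem_singleton_iff]
      tauto
    refine measure_mono_null hsub (measure_iUnion_null fun i => ?_)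
    have hms0 : MeasurableSet (({1, -1} : Set ℝ)ᶜ) :=
      (((Set.finite_singleton ((-1:ℝ))).insert 1).measurableSet).compl
    have hms : MeasurableSet ((fun x : spsIdx N mm → ℝ => x (spsA k i)) ⁻¹' ({1, -1} : Set ℝ)ᶜ) :=
      (measurable_pi_apply _) hms0
    rw [hνapply _ hms]
    have : XT ⁻¹' ((fun x : spsIdx N mm → ℝ => x (spsA k i)) ⁻¹' ({1, -1} : Set ℝ)ᶜ)
        = A k i ⁻¹' ({1, -1} : Set ℝ)ᶜ := rfl
    rw [this]
    have hconc := sps_sign_compl (hA k i)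
    rw [Measure.map_apply (hA k i).1 hms0] at hconc
    exact hconc
  -- the measure-preservation of the swap transformations
  have hT : ∀ k : Fin mm, ν.map (spsT k) = ν := by
    intro k
    have hTE : ∀ ε : Fin N → Bool, ν.map (spsTE k ε) = ν := by
      intro ε
      refine sps_pi_map_comp μc (spsE k) (spsG k ε) (spsG_meas k ε) ?_
      rintro (i | ⟨⟨j, i⟩ | j⟩)
      · -- W coordinate
        have he : spsE k (Sum.inl i : spsIdx N mm) = Sum.inl i := rfl
        rw [he]
        by_cases hb : ε i
        · have hg : spsG k ε (Sum.inl i : spsIdx N mm) = id := by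
            funext t; simp [spsG, hb]
          rw [hg, Measure.map_id]
        · have hg : spsG k ε (Sum.inl i : spsIdx N mm) = fun t => -t := by
            funext t
            simp only [spsG, Sum.elim_inl, hb]
            norm_num
          rw [hg]
          show (P.map (W i)).map (fun t => -t) = P.map (W i)
          rw [Measure.map_map measurable_neg (hWmeas i)]
          have : (fun t : ℝ => -t) ∘ W i = fun ω => -W i ω := rfl
          rw [this, ← hWsym i]
      · -- A coordinate
        have he : spsE k (Sum.inr (Sum.inl (j, i)) : spsIdx N mm) = Sum.inr (Sum.inl (j, i)) := rfl
        rw [he]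
        by_cases hj : j = k
        · have hg : spsG k ε (Sum.inr (Sum.inl (j, i)) : spsIdx N mm) = id := by
            funext t; simp [spsG, hj]
          rw [hg, Measure.map_id]
        · by_cases hb : ε i
          · have hg : spsG k ε (Sum.inr (Sum.inl (j, i)) : spsIdx N mm) = id := by
              funext t; simp [spsG, hj, hb]
            rw [hg, Measure.map_id]
          · have hg : spsG k ε (Sum.inr (Sum.inl (j, i)) : spsIdx N mm) = fun t => -t := by
              funext t
              simp only [spsG, Sum.elim_inr, Sum.elim_inl, hj, if_neg hj, hb]
              norm_num
            rw [hg]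
            show (P.map (A j i)).map (fun t => -t) = P.map (A j i)
            exact sps_sign_neg (hA j i)
      · -- U coordinate
        have he : spsE k (Sum.inr (Sum.inr j) : spsIdx N mm)
            = Sum.inr (Sum.inr (Equiv.swap 0 k.succ j)) := rfl
        have hg : spsG k ε (Sum.inr (Sum.inr j) : spsIdx N mm) = id := rfl
        rw [he, hg, Measure.map_id]
        show P.map (U (Equiv.swap 0 k.succ j)) = P.map (U j)
        exact (hUid (Equiv.swap 0 k.succ j) j).map_eq
    -- partition over sign patterns
    set G : Set (spsIdx N mm → ℝ) := {x | ∀ i, x (spsA k i) = 1 ∨ x (spsA k i) = -1} with hGdef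
    have hGC : G = ⋃ ε : Fin N → Bool, spsC k ε := by
      ext x
      simp only [hGdef, Set.mem_setOf_eq, Set.mem_iUnion]
      constructor
      · intro hx
        refine ⟨fun i => decide (x (spsA k i) = 1), fun i => ?_⟩
        rcases hx i with h | h
        · simp [h]
        · have hne : ¬ ((-1 : ℝ) = 1) := by norm_num
          simp only [decide_eq_true_eq]
          rw [h, if_neg hne]
      · rintro ⟨ε, hε⟩ i
        rw [hε i]
        by_cases hb : ε i <;> simp [hb]
    have key : ∀ B : Set (spsIdx N mm → ℝ), MeasurableSet B → ν (spsT k ⁻¹' B) = ν B := by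
      intro B hB
      have hTB : MeasurableSet (spsT k ⁻¹' B) := spsT_meas k hB
      have step : ∀ S : Set (spsIdx N mm → ℝ), MeasurableSet S → ν S = ∑ ε : Fin N → Bool, ν (S ∩ spsC k ε) := by
        intro S hS
        have h1 : ν S = ν (S ∩ G) := (measure_inter_conull (hGnull k)).symm
        have h2 : S ∩ G = ⋃ ε : Fin N → Bool, (S ∩ spsC k ε) := by
          rw [hGC, Set.inter_iUnion]
        rw [h1, h2, measure_iUnion ?_ (fun ε => hS.inter (spsC_meas k ε)), tsum_fintype]
        intro ε ε' hne
        exact (spsC_disjoint k hne).mono Set.inter_subset_right Set.inter_subset_right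
      rw [step _ hTB, step B hB]
      refine Finset.sum_congr rfl fun ε _ => ?_
      have hseteq : spsT k ⁻¹' B ∩ spsC k ε = spsTE k ε ⁻¹' (B ∩ spsC k ε) := by
        rw [Set.preimage_inter, spsTE_pre_C]
        ext x
        simp only [Set.mem_inter_iff, Set.mem_preimage]
        constructor
        · rintro ⟨h1, h2⟩; rw [← spsT_eq_on_C k ε x h2]; exact ⟨h1, h2⟩
        · rintro ⟨h1, h2⟩; rw [spsT_eq_on_C k ε x h2]; exact ⟨h1, h2⟩
      rw [hseteq, ← Measure.map_apply ?_ (hB.inter (spsC_meas k ε)), hTE ε]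
      exact measurable_pi_iff.mpr fun idx => (spsG_meas k ε idx).comp (measurable_pi_apply _)
    ext B hB
    rw [Measure.map_apply (spsT_meas k) hB, key B hB]
  -- tie-break coordinates are a.s. distinct
  have hdiagP : ∀ j j' : Fin (mm + 1), j ≠ j' → P {ω | U j ω = U j' ω} = 0 := by
    intro j j' hjj
    have hne : (spsU j : spsIdx N mm) ≠ spsU j' := by
      simp only [spsU, ne_eq, Sum.inr.injEq]
      exact fun h => hjj h
    have hind : IndepFun (U j) (U j') P := hindep.indepFun hne
    have hmap := (indepFun_iff_map_prod_eq_prod_map_map (hUmeas j).aemeasurable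
      (hUmeas j').aemeasurable).mp hind
    have hdm : MeasurableSet {p : ℝ × ℝ | p.1 = p.2} :=
      measurableSet_eq_fun measurable_fst measurable_snd
    have h1 : P {ω | U j ω = U j' ω} = (P.map fun ω => (U j ω, U j' ω)) {p : ℝ × ℝ | p.1 = p.2} := by
      rw [Measure.map_apply ((hUmeas j).prodMk (hUmeas j')) hdm]
      rfl
    rw [h1, hmap, Measure.prod_apply hdm]
    have hz : ∀ a : ℝ, (P.map (U j')) (Prod.mk a ⁻¹' {p : ℝ × ℝ | p.1 = p.2}) = 0 := by
      intro a
      have hpre : Prod.mk a ⁻¹' {p : ℝ × ℝ | p.1 = p.2} = {a} := by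
        ext b; simp [eq_comm]
      rw [hpre, Measure.map_apply (hUmeas j') (measurableSet_singleton a)]
      have : U j' ⁻¹' {a} = {ω | U j' ω = a} := by ext ω; simp
      rw [this]
      exact hUcont j' a
    calc (∫⁻ a, (P.map (U j')) (Prod.mk a ⁻¹' {p : ℝ × ℝ | p.1 = p.2}) ∂(P.map (U j)))
        = ∫⁻ _, 0 ∂(P.map (U j)) := lintegral_congr hz
      _ = 0 := lintegral_zero
  -- the distinctness set
  set D : Set (spsIdx N mm → ℝ) :=
    ⋂ j, ⋂ j', {x : spsIdx N mm → ℝ | j ≠ j' → x (spsU j) ≠ x (spsU j')} with hDdef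
  have hDmeas : MeasurableSet D := by
    refine MeasurableSet.iInter fun j => MeasurableSet.iInter fun j' => ?_
    by_cases hjj : j = j'
    · have : {x : spsIdx N mm → ℝ | j ≠ j' → x (spsU j) ≠ x (spsU j')} = Set.univ := by
        ext x; simp [hjj]
      rw [this]; exact MeasurableSet.univ
    · have : {x : spsIdx N mm → ℝ | j ≠ j' → x (spsU j) ≠ x (spsU j')}
          = {x : spsIdx N mm → ℝ | x (spsU j) = x (spsU j')}ᶜ := by
        ext x; simp [hjj]
      rw [this]
      exact (measurableSet_eq_fun (f := fun x : spsIdx N mm → ℝ => x (spsU j))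
        (g := fun x : spsIdx N mm → ℝ => x (spsU j')) (measurable_pi_apply _)
        (measurable_pi_apply _)).compl
  have hDnull : ν Dᶜ = 0 := by
    have hsub : Dᶜ ⊆ ⋃ j, ⋃ j', {x : spsIdx N mm → ℝ | j ≠ j' ∧ x (spsU j) = x (spsU j')} := by
      intro x hx
      simp only [hDdef, Set.compl_iInter, Set.mem_iUnion, Set.mem_compl_iff, Set.mem_setOf_eq] at hx
      obtain ⟨j, j', hx⟩ := hx
      push_neg at hx
      exact Set.mem_iUnion.mpr ⟨j, Set.mem_iUnion.mpr ⟨j', hx⟩⟩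
    refine measure_mono_null hsub (measure_iUnion_null fun j => measure_iUnion_null fun j' => ?_)
    by_cases hjj : j = j'
    · have : {x : spsIdx N mm → ℝ | j ≠ j' ∧ x (spsU j) = x (spsU j')} = ∅ := by
        ext x; simp [hjj]
      simp [this]
    · have hsub2 : {x : spsIdx N mm → ℝ | j ≠ j' ∧ x (spsU j) = x (spsU j')}
          ⊆ {x : spsIdx N mm → ℝ | x (spsU j) = x (spsU j')} := fun x hx => hx.2
      refine measure_mono_null hsub2 ?_
      rw [hνapply _ (measurableSet_eq_fun (f := fun x : spsIdx N mm → ℝ => x (spsU j))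
        (g := fun x : spsIdx N mm → ℝ => x (spsU j')) (measurable_pi_apply _)
        (measurable_pi_apply _))]
      exact hdiagP j j' hjj
  have hDinj : ∀ x ∈ D, Function.Injective (spsV φ c x) := by
    intro x hx j j' h
    by_contra hjj
    have h2 := congrArg (fun p : ℝ ×ₗ ℝ => (ofLex p).2) h
    simp only [spsV, ofLex_toLex] at h2
    exact (Set.mem_iInter.mp (Set.mem_iInter.mp hx j) j') hjj h2
  -- exchangeability of the rank of the reference statistic
  have hswap : ∀ (k : Fin mm) (r : ℕ),
      ν {x : spsIdx N mm → ℝ | spsRank (spsV φ c x) k.succ = r}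
        = ν {x : spsIdx N mm → ℝ | spsRank (spsV φ c x) 0 = r} := by
    intro k r
    have hBm : MeasurableSet {x : spsIdx N mm → ℝ | spsRank (spsV φ c x) k.succ = r} :=
      (spsRank_V_meas φ c k.succ) (measurableSet_singleton r)
    have h1 : ν {x : spsIdx N mm → ℝ | spsRank (spsV φ c x) k.succ = r}
        = ν (spsT k ⁻¹' {x | spsRank (spsV φ c x) k.succ = r}) := by
      conv_lhs => rw [← hT k]
      rw [Measure.map_apply (spsT_meas k) hBm]
    have hpoint : ∀ x ∈ {x : spsIdx N mm → ℝ | ∀ i, x (spsA k i) = 1 ∨ x (spsA k i) = -1},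
        spsRank (spsV φ c (spsT k x)) k.succ = spsRank (spsV φ c x) 0 := by
      intro x hx
      have hv := spsV_spsT φ c k x hx
      have hsw : Equiv.swap (0 : Fin (mm + 1)) k.succ k.succ = 0 := Equiv.swap_apply_right _ _
      unfold spsRank
      apply Finset.card_bij (fun j _ => Equiv.swap (0 : Fin (mm + 1)) k.succ j)
      · intro j hj
        simp only [Finset.mem_filter, Finset.mem_univ, true_and] at hj ⊢
        rw [hv j, hv k.succ, hsw] at hj
        exact hj
      · intro a _ b _ hab
        exact (Equiv.swap _ _).injective hab
      · intro b hb
        simp only [Finset.mem_filter, Finset.mem_univ, true_and] at hb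
        refine ⟨Equiv.swap (0 : Fin (mm + 1)) k.succ b, ?_, Equiv.swap_apply_self _ _ _⟩
        simp only [Finset.mem_filter, Finset.mem_univ, true_and]
        rw [hv _, hv k.succ, hsw, Equiv.swap_apply_self]
        exact hb
    have hseteq : spsT k ⁻¹' {x | spsRank (spsV φ c x) k.succ = r}
          ∩ {x : spsIdx N mm → ℝ | ∀ i, x (spsA k i) = 1 ∨ x (spsA k i) = -1}
        = {x | spsRank (spsV φ c x) 0 = r}
          ∩ {x : spsIdx N mm → ℝ | ∀ i, x (spsA k i) = 1 ∨ x (spsA k i) = -1} := by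
      ext x
      simp only [Set.mem_inter_iff, Set.mem_preimage, Set.mem_setOf_eq]
      constructor
      · rintro ⟨h1, h2⟩; exact ⟨(hpoint x h2).symm.trans h1, h2⟩
      · rintro ⟨h1, h2⟩; exact ⟨(hpoint x h2).trans h1, h2⟩
    rw [h1, ← measure_inter_conull (hGnull k), hseteq, measure_inter_conull (hGnull k)]
  -- uniformity of the rank
  have hun : ∀ r : ℕ, r ≤ mm → ν {x : spsIdx N mm → ℝ | spsRank (spsV φ c x) 0 = r}
      = (((mm + 1 : ℕ) : ℝ≥0∞))⁻¹ := by
    intro r hr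
    set a := ν {x : spsIdx N mm → ℝ | spsRank (spsV φ c x) 0 = r} with ha
    have hBkm : ∀ k : Fin (mm + 1),
        MeasurableSet ({x : spsIdx N mm → ℝ | spsRank (spsV φ c x) k = r} ∩ D) :=
      fun k => ((spsRank_V_meas φ c k) (measurableSet_singleton r)).inter hDmeas
    have hcov : (⋃ k : Fin (mm + 1), ({x : spsIdx N mm → ℝ | spsRank (spsV φ c x) k = r} ∩ D)) = D := by
      ext x
      simp only [Set.mem_iUnion, Set.mem_inter_iff, Set.mem_setOf_eq]
      constructor
      · rintro ⟨k, _, hx⟩; exact hx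
      · intro hx
        obtain ⟨k, hk⟩ := spsRank_surj (spsV φ c x) (hDinj x hx) r hr
        exact ⟨k, hk, hx⟩
    have hdisj : Pairwise fun k k' : Fin (mm + 1) =>
        Disjoint ({x : spsIdx N mm → ℝ | spsRank (spsV φ c x) k = r} ∩ D)
          ({x : spsIdx N mm → ℝ | spsRank (spsV φ c x) k' = r} ∩ D) := by
      intro k k' hkk
      rw [Set.disjoint_left]
      rintro x ⟨hx1, hxD⟩ ⟨hx2, _⟩
      exact hkk (spsRank_inj (spsV φ c x) (hDinj x hxD) (hx1.trans hx2.symm))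
    have hsum : ∑ k : Fin (mm + 1), ν ({x : spsIdx N mm → ℝ | spsRank (spsV φ c x) k = r} ∩ D) = 1 := by
      rw [← tsum_fintype (L := SummationFilter.unconditional _), ← measure_iUnion hdisj hBkm, hcov]
      have := measure_add_measure_compl (μ := ν) hDmeas
      rw [hDnull, add_zero] at this
      rw [this, measure_univ]
    have hall : ∀ k : Fin (mm + 1),
        ν ({x : spsIdx N mm → ℝ | spsRank (spsV φ c x) k = r} ∩ D) = a := by
      intro k
      rw [measure_inter_conull hDnull]
      induction k using Fin.cases with
      | zero => rfl
      | succ k' => exact hswap k' r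
    rw [Finset.sum_congr rfl (fun k _ => hall k), Finset.sum_const, Finset.card_univ,
      Fintype.card_fin] at hsum
    have hn0 : ((mm + 1 : ℕ) : ℝ≥0∞) ≠ 0 := by
      simp
    have hnt : ((mm + 1 : ℕ) : ℝ≥0∞) ≠ ⊤ := ENNReal.natCast_ne_top _
    have h2 : ((mm + 1 : ℕ) : ℝ≥0∞) * a = ((mm + 1 : ℕ) : ℝ≥0∞) * ((mm + 1 : ℕ) : ℝ≥0∞)⁻¹ := by
      rw [ENNReal.mul_inv_cancel hn0 hnt, ← hsum, nsmul_eq_mul]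
    exact (ENNReal.mul_right_inj hn0 hnt).mp h2
  -- identify the event with a measurable set in the product space
  have hZeq : ∀ (j : Fin (mm + 1)) ω, spsZc φ c Y A p₀ j ω = spsZx φ c j (XT ω) := by
    intro j ω
    have hYW : ∀ i, Y i ω - (inner ℝ (φ i) p₀ : ℝ) = W i ω := by
      intro i; rw [hY i ω]; ring
    induction j using Fin.cases with
    | zero =>
      show ‖∑ i, (c i * (Y i ω - (inner ℝ (φ i) p₀ : ℝ))) • φ i‖ ^ 2
        = ‖∑ i, (c i * XT ω (spsW i)) • φ i‖ ^ 2
      rw [Finset.sum_congr rfl (fun i _ => by rw [hYW i]; rfl :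
        ∀ i ∈ Finset.univ, (c i * (Y i ω - (inner ℝ (φ i) p₀ : ℝ))) • φ i
          = (c i * XT ω (spsW i)) • φ i)]
    | succ j' =>
      show ‖∑ i, (c i * A j' i ω * (Y i ω - (inner ℝ (φ i) p₀ : ℝ))) • φ i‖ ^ 2
        = ‖∑ i, (c i * XT ω (spsA j' i) * XT ω (spsW i)) • φ i‖ ^ 2
      rw [Finset.sum_congr rfl (fun i _ => by rw [hYW i]; rfl :
        ∀ i ∈ Finset.univ, (c i * A j' i ω * (Y i ω - (inner ℝ (φ i) p₀ : ℝ))) • φ i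
          = (c i * XT ω (spsA j' i) * XT ω (spsW i)) • φ i)]
  have hEvent : {ω | q ≤ Set.ncard {j : Fin mm |
        (toLex (spsZc φ c Y A p₀ 0 ω, U 0 ω) : ℝ ×ₗ ℝ)
          < toLex (spsZc φ c Y A p₀ j.succ ω, U j.succ ω)}}
      = XT ⁻¹' {x : spsIdx N mm → ℝ |
          q ≤ #(univ.filter fun j : Fin mm => spsV φ c x 0 < spsV φ c x j.succ)} := by
    ext ω
    simp only [Set.mem_setOf_eq, Set.mem_preimage]
    have hsf : {j : Fin mm | (toLex (spsZc φ c Y A p₀ 0 ω, U 0 ω) : ℝ ×ₗ ℝ)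
          < toLex (spsZc φ c Y A p₀ j.succ ω, U j.succ ω)}
        = ↑(univ.filter fun j : Fin mm => spsV φ c (XT ω) 0 < spsV φ c (XT ω) j.succ) := by
      ext j
      simp only [Set.mem_setOf_eq, Finset.coe_filter, Finset.mem_univ, true_and]
      rw [hZeq 0 ω, hZeq j.succ ω]
      exact Iff.rfl
    rw [hsf, Set.ncard_coe_finset]
  have hBset : MeasurableSet {x : spsIdx N mm → ℝ |
      q ≤ #(univ.filter fun j : Fin mm => spsV φ c x 0 < spsV φ c x j.succ)} :=
    (spsCnt_meas φ c) measurableSet_Ici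
  rw [hEvent, ← hνapply _ hBset]
  -- on D, the count is determined by the rank
  have hBD : {x : spsIdx N mm → ℝ |
        q ≤ #(univ.filter fun j : Fin mm => spsV φ c x 0 < spsV φ c x j.succ)} ∩ D
      = {x : spsIdx N mm → ℝ | spsRank (spsV φ c x) 0 ≤ mm - q} ∩ D := by
    ext x
    simp only [Set.mem_inter_iff, Set.mem_setOf_eq, and_congr_left_iff]
    intro hxD
    rw [spsCnt_eq (spsV φ c x) (hDinj x hxD)]
    have h1 := spsRank_le (spsV φ c x) 0
    omega
  have hstep : ν {x : spsIdx N mm → ℝ |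
        q ≤ #(univ.filter fun j : Fin mm => spsV φ c x 0 < spsV φ c x j.succ)}
      = ν {x : spsIdx N mm → ℝ | spsRank (spsV φ c x) 0 ≤ mm - q} := by
    rw [← measure_inter_conull hDnull, hBD, measure_inter_conull hDnull]
  rw [hstep]
  -- decompose according to the value of the rank
  have hdecomp : {x : spsIdx N mm → ℝ | spsRank (spsV φ c x) 0 ≤ mm - q}
      = ⋃ r : Fin (mm - q + 1), {x : spsIdx N mm → ℝ | spsRank (spsV φ c x) 0 = (r : ℕ)} := by
    ext x
    simp only [Set.mem_setOf_eq, Set.mem_iUnion]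
    constructor
    · intro hx
      exact ⟨⟨spsRank (spsV φ c x) 0, Nat.lt_succ_of_le hx⟩, rfl⟩
    · rintro ⟨r, hr⟩
      rw [hr]
      exact Nat.le_of_lt_succ r.2
  have hfinal : ν {x : spsIdx N mm → ℝ | spsRank (spsV φ c x) 0 ≤ mm - q}
      = ((mm - q + 1 : ℕ) : ℝ≥0∞) * (((mm + 1 : ℕ) : ℝ≥0∞))⁻¹ := by
    have hdisj2 : Pairwise (Function.onFun Disjoint
        fun r : Fin (mm - q + 1) => {x : spsIdx N mm → ℝ | spsRank (spsV φ c x) 0 = (r : ℕ)}) := by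
      intro r r' hrr
      rw [Function.onFun, Set.disjoint_left]
      intro x hx hx'
      simp only [Set.mem_setOf_eq] at hx hx'
      exact hrr (Fin.val_injective (hx.symm.trans hx'))
    rw [hdecomp, measure_iUnion hdisj2 (fun r =>
      (show MeasurableSet {x : spsIdx N mm → ℝ | spsRank (spsV φ c x) 0 = (r : ℕ)} from
        (spsRank_V_meas φ c 0) (measurableSet_singleton _))), tsum_fintype]
    have heach : ∀ r : Fin (mm - q + 1),
        ν {x : spsIdx N mm → ℝ | spsRank (spsV φ c x) 0 = (r : ℕ)}
          = (((mm + 1 : ℕ) : ℝ≥0∞))⁻¹ := by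
      intro r
      refine hun (r : ℕ) ?_
      have := Nat.le_of_lt_succ r.2
      omega
    rw [Finset.sum_congr rfl (fun r _ => heach r), Finset.sum_const, Finset.card_univ,
      Fintype.card_fin, nsmul_eq_mul]
  rw [hfinal]
  -- final arithmetic
  have hn0 : ((mm + 1 : ℕ) : ℝ≥0∞) ≠ 0 := by simp
  have hnt : ((mm + 1 : ℕ) : ℝ≥0∞) ≠ ⊤ := ENNReal.natCast_ne_top _
  have hq' : ((q : ℝ≥0∞) / ((mm + 1 : ℕ) : ℝ≥0∞)) ≠ ⊤ := by
    rw [ENNReal.div_eq_inv_mul]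
    exact ENNReal.mul_ne_top (ENNReal.inv_ne_top.mpr hn0) (ENNReal.natCast_ne_top q)
  refine ENNReal.eq_sub_of_add_eq hq' ?_
  rw [ENNReal.div_eq_inv_mul, mul_comm ((((mm + 1 : ℕ) : ℝ≥0∞))⁻¹) ((q : ℕ) : ℝ≥0∞),
    ← add_mul, ← Nat.cast_add]
  have hnat : mm - q + 1 + q = mm + 1 := by omega
  rw [hnat, ENNReal.mul_inv_cancel hn0 hnt]
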